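/- Theorem 1 (monotone equilibrium): Suppose sender optimality holds for a reasonable wage function ŵ : C → ℝ, and suppose m̂₂(t) ≤ m₂° for all t ∈ T. Then the equilibrium is monotone: m̂₁ is nondecreasing on T, m̂₂ is nonincreasing on T, and the total signal t ↦ m̂₁(t) + m̂₂(t) is nondecreasing on T. -/

import Mathlib

open Set

/-- Theorem 1 (monotone equilibrium): under sender optimality for a reasonable wage
function, `m1` is nondecreasing, `m2` is nonincreasing, and `m1 + m2` is nondecreasing. -/
theorem equilibrium_is_monotone
    (tl th M α m2o : ℝ) (c : ℝ → ℝ → ℝ) (h : ℝ → ℝ)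
    (m1 m2 : ℝ → ℝ) (w : ℝ → ℝ → ℝ)
    (htl : 0 < tl) (htlth : tl < th) (hM : 0 < M) (hα : 0 ≤ α)
    -- strict single crossing property of c
    (hsc : ∀ a a' t t', a > a' → 0 ≤ a' → t ∈ Icc tl th → t' ∈ Icc tl th → t > t' →
      c a t + c a' t' < c a t' + c a' t)
    -- strict convexity of h
    (hconv : StrictConvexOn ℝ (Ici 0) h)
    -- m2o is the unique maximizer of m ↦ α⬝m − h m over ℝ≥0, with 0 < m2o < M
    (hm2o : 0 < m2o ∧ m2o < M)
    (hmax : ∀ m, 0 ≤ m → m ≠ m2o → α * m - h m < α * m2o - h m2o)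
    -- feasibility of the strategies
    (hfeas : ∀ t ∈ Icc tl th, 0 ≤ m1 t ∧ 0 ≤ m2 t ∧ m1 t + m2 t ≤ M)
    -- sender optimality
    (hopt : ∀ t ∈ Icc tl th, ∀ p q : ℝ, 0 ≤ p → 0 ≤ q → p + q ≤ M →
      w p q - h q - c p t ≤ w (m1 t) (m2 t) - h (m2 t) - c (m1 t) t)
    -- the wage function is reasonable
    (hreas : ∀ a q q' : ℝ, 0 ≤ a → 0 ≤ q → a + q < M → 0 ≤ q' → a + q' < M →
      w a q - w a q' = α * (q - q'))
    -- the bound on the non-cognitive signal derived from optimality and convexity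
    (hbound : ∀ t ∈ Icc tl th, m2 t ≤ m2o) :
    (∀ t ∈ Icc tl th, ∀ t' ∈ Icc tl th, t < t' → m1 t ≤ m1 t') ∧
    (∀ t ∈ Icc tl th, ∀ t' ∈ Icc tl th, t < t' → m2 t' ≤ m2 t) ∧
    (∀ t ∈ Icc tl th, ∀ t' ∈ Icc tl th, t < t' → m1 t + m2 t ≤ m1 t' + m2 t') := by
  obtain ⟨hm2o0, hm2oM⟩ := hm2o
  -- strict monotonicity of g = α·m − h m on [0, m2o]
  have hgmono : ∀ x y : ℝ, 0 ≤ x → x < y → y ≤ m2o →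
      α * x - h x < α * y - h y := by
    intro x y hx hxy hym
    rcases eq_or_lt_of_le hym with rfl | hylt
    · exact hmax x hx (ne_of_lt hxy)
    · have hxm : x < m2o := hxy.trans hylt
      set lam := (m2o - y) / (m2o - x) with hlamdef
      set mu := (y - x) / (m2o - x) with hmudef
      have hd : 0 < m2o - x := by linarith
      have hlam : 0 < lam := div_pos (by linarith) hd
      have hmu : 0 < mu := div_pos (by linarith) hd
      have hsum : lam + mu = 1 := by
        rw [hlamdef, hmudef, ← add_div, div_eq_one_iff_eq hd.ne']; ring
      have hcomb : lam * x + mu * m2o = y := by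
        rw [hlamdef, hmudef, div_mul_eq_mul_div, div_mul_eq_mul_div, ← add_div, div_eq_iff hd.ne']
        ring
      have hconc := hconv.2 (show x ∈ Ici (0:ℝ) from hx)
        (show m2o ∈ Ici (0:ℝ) from hm2o0.le) (ne_of_lt hxm) hlam hmu hsum
      rw [smul_eq_mul, smul_eq_mul, smul_eq_mul, smul_eq_mul, hcomb] at hconc
      have hgx := hmax x hx (ne_of_lt hxm)
      have hB : mu * (α * x - h x) < mu * (α * m2o - h m2o) :=
        mul_lt_mul_of_pos_left hgx hmu
      have hC : α * y = lam * (α * x) + mu * (α * m2o) := by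
        rw [← hcomb]; ring
      have hE : (lam + mu) * (α * x - h x) = α * x - h x := by
        rw [hsum]; ring
      nlinarith [hconc, hB, hC, hE]
  -- characterization: m2 t = min m2o (M - m1 t)
  have hform : ∀ t ∈ Icc tl th, m2 t = min m2o (M - m1 t) := by
    intro t ht
    obtain ⟨ha0, hq0, haqM⟩ := hfeas t ht
    have h1 : m2 t ≤ m2o := hbound t ht
    have h2 : m2 t ≤ M - m1 t := by linarith
    have hle : m2 t ≤ min m2o (M - m1 t) := le_min h1 h2
    rcases eq_or_lt_of_le hle with heq | hlt
    · exact heq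
    · exfalso
      have hqm : m2 t < m2o := lt_of_lt_of_le hlt (min_le_left _ _)
      have hqM : m1 t + m2 t < M := by
        have := lt_of_lt_of_le hlt (min_le_right _ _); linarith
      set a := m1 t
      set qq := m2 t
      set q' := min m2o ((M - a + qq) / 2) with hq'def
      have hq'gt : qq < q' := lt_min hqm (by linarith)
      have hq'le : q' ≤ m2o := min_le_left _ _
      have hq'0 : 0 ≤ q' := le_of_lt (lt_of_le_of_lt hq0 hq'gt)
      have haq' : a + q' < M := by
        have : q' ≤ (M - a + qq) / 2 := min_le_right _ _
        linarith
      have hw := hreas a q' qq ha0 hq'0 haq' hq0 hqM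
      have hoq := hopt t ht a q' ha0 hq'0 haq'.le
      have hg := hgmono qq q' hq0 hq'gt hq'le
      nlinarith [hw, hoq, hg]
  -- m1 is nondecreasing by revealed preference + single crossing
  have hm1 : ∀ t ∈ Icc tl th, ∀ t' ∈ Icc tl th, t < t' → m1 t ≤ m1 t' := by
    intro t ht t' ht' htt'
    by_contra hcon
    push_neg at hcon
    obtain ⟨ha0, hq0, haqM⟩ := hfeas t ht
    obtain ⟨ha0', hq0', haqM'⟩ := hfeas t' ht'
    have h1 := hopt t ht (m1 t') (m2 t') ha0' hq0' haqM'
    have h2 := hopt t' ht' (m1 t) (m2 t) ha0 hq0 haqM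
    have hcross := hsc (m1 t) (m1 t') t' t hcon ha0' ht' ht htt'
    linarith
  refine ⟨hm1, ?_, ?_⟩
  · intro t ht t' ht' htt'
    rw [hform t ht, hform t' ht']
    have := hm1 t ht t' ht' htt'
    exact min_le_min le_rfl (by linarith)
  · intro t ht t' ht' htt'
    rw [hform t ht, hform t' ht']
    have h12 := hm1 t ht t' ht' htt'
    rcases min_cases m2o (M - m1 t') with ⟨heq, hle⟩ | ⟨heq, hle⟩ <;>
      rw [heq] <;>
      [skip; skip] <;>
      have := min_le_left m2o (M - m1 t) <;>
      have := min_le_right m2o (M - m1 t) <;>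
      linarith
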